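/- (Theorem 2, gradient form) Let w ∈ ℝ^d be nonzero, ŵ = w/‖w‖, and β > 0. For the one-layer networks g(x) = relu(⟨w, x⟩) and g_β(x) = softplus_β(⟨w, x⟩), the expected gradient of g over rank-one perturbations along ŵ equals the gradient of the rescaled softplus network: for every x ∈ ℝ^d and every coordinate k, ∫_ℝ p_β(ε) · w_k · 𝟙(⟨w, x⟩ − ‖w‖·ε > 0) dε = w_k · σ_{β/‖w‖}(⟨w, x⟩), where w_k · 𝟙(⟨w, x⟩ − ‖w‖·ε > 0) is the k-th component of the gradient of g at the perturbed point x − ε·ŵ whenever ⟨w, x⟩ ≠ ‖w‖·ε, and the right-hand side is the k-th component of the gradient of g_{β/‖w‖} at x. -/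

import Mathlib

open MeasureTheory
open scoped RealInnerProductSpace

noncomputable def softplus (β t : ℝ) : ℝ := (1 / β) * Real.log (1 + Real.exp (β * t))

noncomputable def logisticSigma (β t : ℝ) : ℝ := 1 / (1 + Real.exp (-(β * t)))

noncomputable def pdens (β ε : ℝ) : ℝ :=
  β / (Real.exp (β * ε / 2) + Real.exp (-(β * ε / 2))) ^ 2

noncomputable def relu (t : ℝ) : ℝ := max t 0

open Filter Set Topology InnerProductSpace

lemma pdens_eq (β ε : ℝ) :
    pdens β ε = β * Real.exp (-(β * ε)) / (1 + Real.exp (-(β * ε))) ^ 2 := by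
  unfold pdens
  have h1 : Real.exp (β * ε / 2) + Real.exp (-(β * ε / 2))
      = Real.exp (β * ε / 2) * (1 + Real.exp (-(β * ε))) := by
    rw [mul_add, mul_one, ← Real.exp_add, show β * ε / 2 + -(β * ε) = -(β * ε / 2) by ring]
  have h2 : Real.exp (β * ε / 2) ^ 2 = Real.exp (β * ε) := by
    rw [sq, ← Real.exp_add, show β * ε / 2 + β * ε / 2 = β * ε by ring]
  rw [h1, mul_pow, h2, Real.exp_neg]
  have hpos : (0:ℝ) < Real.exp (β * ε) := Real.exp_pos _
  have hpos2 : (0:ℝ) < 1 + (Real.exp (β * ε))⁻¹ := by positivity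
  field_simp

lemma hasDerivAt_logisticSigma (β t : ℝ) :
    HasDerivAt (logisticSigma β) (pdens β t) t := by
  have hpos : (0:ℝ) < 1 + Real.exp (-(β * t)) := by positivity
  have h0 : HasDerivAt (fun s : ℝ => -(β * s)) (-β) t := by
    exact ((hasDerivAt_id t).const_mul β).neg.congr_deriv (by ring)
  have h1 : HasDerivAt (fun s : ℝ => 1 + Real.exp (-(β * s)))
      (Real.exp (-(β * t)) * (-β)) t := (h0.exp).const_add 1
  have h2 : HasDerivAt (fun s : ℝ => 1 / (1 + Real.exp (-(β * s))))
      (-(Real.exp (-(β * t)) * (-β)) / (1 + Real.exp (-(β * t))) ^ 2) t := by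
    rw [show (fun s : ℝ => 1 / (1 + Real.exp (-(β * s)))) = (fun s => 1 + Real.exp (-(β * s)))⁻¹ from by
      funext s; simp [one_div]]
    exact h1.inv hpos.ne'
  have : HasDerivAt (logisticSigma β)
      (-(Real.exp (-(β * t)) * (-β)) / (1 + Real.exp (-(β * t))) ^ 2) t := h2
  convert this using 1
  rw [pdens_eq]; ring

lemma tendsto_logisticSigma_atBot (β : ℝ) (hβ : 0 < β) :
    Tendsto (logisticSigma β) atBot (𝓝 0) := by
  have h1 : Tendsto (fun t : ℝ => -(β * t)) atBot atTop := by
    have := Tendsto.const_mul_atTop hβ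
      (tendsto_neg_atBot_atTop : Tendsto (fun t : ℝ => -t) atBot atTop)
    simpa [mul_comm, mul_neg, neg_mul] using this
  have h2 : Tendsto (fun t : ℝ => 1 + Real.exp (-(β * t))) atBot atTop :=
    tendsto_atTop_add_const_left _ 1 (Real.tendsto_exp_atTop.comp h1)
  have h3 := tendsto_inv_atTop_zero.comp h2
  unfold logisticSigma
  simpa [Function.comp_def, one_div] using h3

lemma integrableOn_pdens (β : ℝ) (hβ : 0 < β) (c : ℝ) :
    IntegrableOn (pdens β) (Iic c) := by
  have hexp0 : IntegrableOn (fun x : ℝ => Real.exp (-β * x)) (Ioi (-c)) :=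
    exp_neg_integrableOn_Ioi (-c) hβ
  have hexp1 : IntegrableOn (fun x : ℝ => Real.exp (β * x)) (Iio c) := by
    have := ((Measure.measurePreserving_neg (volume : Measure ℝ)).integrableOn_comp_preimage
      (Homeomorph.neg ℝ).measurableEmbedding (f := fun x : ℝ => Real.exp (-β * x))
      (s := Ioi (-c))).2 hexp0
    simpa [Function.comp_def, neg_preimage, neg_Ioi, neg_neg, mul_neg, neg_mul] using this
  have hexp : IntegrableOn (fun x : ℝ => β * Real.exp (β * x)) (Iic c) := by
    rw [integrableOn_Iic_iff_integrableOn_Iio]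
    exact hexp1.const_mul β
  have hcont : Continuous (pdens β) := by
    unfold pdens
    apply Continuous.div continuous_const (by fun_prop)
    intro x
    positivity
  refine Integrable.mono hexp (hcont.aestronglyMeasurable.restrict) ?_
  filter_upwards with ε
  rw [Real.norm_eq_abs, Real.norm_eq_abs, abs_of_nonneg, abs_of_nonneg]
  · unfold pdens
    rw [div_le_iff₀ (by positivity)]
    have hb : Real.exp (-(β * ε)) ≤ (Real.exp (β * ε / 2) + Real.exp (-(β * ε / 2))) ^ 2 := by
      have : Real.exp (-(β * ε / 2)) ^ 2 = Real.exp (-(β * ε)) := by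
        rw [sq, ← Real.exp_add, show -(β * ε / 2) + -(β * ε / 2) = -(β * ε) by ring]
      nlinarith [Real.exp_pos (β * ε / 2), Real.exp_pos (-(β * ε / 2))]
    calc β = β * Real.exp (β * ε) * Real.exp (-(β * ε)) := by
              rw [mul_assoc, ← Real.exp_add]; simp
      _ ≤ β * Real.exp (β * ε) * (Real.exp (β * ε / 2) + Real.exp (-(β * ε / 2))) ^ 2 := by
              have : (0:ℝ) ≤ β * Real.exp (β * ε) := by positivity
              exact mul_le_mul_of_nonneg_left hb this
  · positivity
  · unfold pdens; positivity

lemma integral_pdens_Iio (β : ℝ) (hβ : 0 < β) (c : ℝ) :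
    ∫ ε in Iio c, pdens β ε = logisticSigma β c := by
  rw [setIntegral_congr_set (Iio_ae_eq_Iic (a := c))]
  have h := integral_Iic_of_hasDerivAt_of_tendsto'
    (fun t _ => hasDerivAt_logisticSigma β t)
    (integrableOn_pdens β hβ c) (tendsto_logisticSigma_atBot β hβ)
  rw [h, sub_zero]

lemma hasGradientAt_inner_right {d : ℕ} (w z : EuclideanSpace ℝ (Fin d)) :
    HasGradientAt (fun y : EuclideanSpace ℝ (Fin d) => ⟪w, y⟫) w z := by
  rw [hasGradientAt_iff_hasFDerivAt]
  have h := (toDual ℝ (EuclideanSpace ℝ (Fin d)) w).hasFDerivAt (x := z)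
  exact h.congr_of_eventuallyEq (by filter_upwards with y; simp)

lemma hasGradientAt_smul_inner {d : ℕ} (w z : EuclideanSpace ℝ (Fin d)) {φ : ℝ → ℝ} {c : ℝ}
    (hφ : HasDerivAt φ c ⟪w, z⟫) :
    HasGradientAt (fun y : EuclideanSpace ℝ (Fin d) => φ ⟪w, y⟫) (c • w) z := by
  rw [hasGradientAt_iff_hasFDerivAt]
  have hL : HasFDerivAt (fun y : EuclideanSpace ℝ (Fin d) => ⟪w, y⟫)
      (toDual ℝ (EuclideanSpace ℝ (Fin d)) w) z :=
    (hasGradientAt_inner_right w z).hasFDerivAt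
  have h := hφ.comp_hasFDerivAt z hL
  have heq : (c • (toDual ℝ (EuclideanSpace ℝ (Fin d)) w) : EuclideanSpace ℝ (Fin d) →L[ℝ] ℝ)
      = toDual ℝ (EuclideanSpace ℝ (Fin d)) (c • w) := by
    ext v; simp [real_inner_smul_left]
  rw [← heq]
  exact h

/-- (Theorem 2, gradient form) Let `w ∈ ℝ^d` be nonzero, `ŵ = w/‖w‖`, and `β > 0`. For the
one-layer networks `g(x) = relu(⟨w, x⟩)` and `g_β(x) = softplus_β(⟨w, x⟩)`, the expected
gradient of `g` over rank-one perturbations along `ŵ` equals the gradient of the rescaled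
softplus network: for every `x ∈ ℝ^d` and every coordinate `k`,
`∫_ℝ p_β(ε) · w_k · 𝟙(⟨w, x⟩ − ‖w‖·ε > 0) dε = w_k · σ_{β/‖w‖}(⟨w, x⟩)`, where
`w_k · 𝟙(⟨w, x⟩ − ‖w‖·ε > 0)` is the `k`-th component of the gradient of `g` at the
perturbed point `x − ε·ŵ` whenever `⟨w, x⟩ ≠ ‖w‖·ε`, and the right-hand side is the `k`-th
component of the gradient of `g_{β/‖w‖}` at `x`. -/
theorem expected_gradient_relu_eq_gradient_softplus
    (d : ℕ) (w : EuclideanSpace ℝ (Fin d)) (hw : w ≠ 0) (β : ℝ) (hβ : 0 < β)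
    (x : EuclideanSpace ℝ (Fin d)) :
    (∀ k : Fin d,
      ∫ ε : ℝ, pdens β ε * (w k * (if 0 < ⟪w, x⟫ - ‖w‖ * ε then (1 : ℝ) else 0))
        = w k * logisticSigma (β / ‖w‖) ⟪w, x⟫) ∧
    (∀ ε : ℝ, ⟪w, x⟫ ≠ ‖w‖ * ε →
      HasGradientAt (fun y : EuclideanSpace ℝ (Fin d) => relu ⟪w, y⟫)
        ((if 0 < ⟪w, x⟫ - ‖w‖ * ε then (1 : ℝ) else 0) • w) (x - ε • (‖w‖⁻¹ • w))) ∧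
    ((∀ ε : ℝ, ∀ k : Fin d,
        ((if 0 < ⟪w, x⟫ - ‖w‖ * ε then (1 : ℝ) else 0) • w) k
          = w k * (if 0 < ⟪w, x⟫ - ‖w‖ * ε then (1 : ℝ) else 0)) ∧
      HasGradientAt (fun y : EuclideanSpace ℝ (Fin d) => softplus (β / ‖w‖) ⟪w, y⟫)
        (logisticSigma (β / ‖w‖) ⟪w, x⟫ • w) x ∧
      ∀ k : Fin d, (logisticSigma (β / ‖w‖) ⟪w, x⟫ • w) k
        = w k * logisticSigma (β / ‖w‖) ⟪w, x⟫) := by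
  have hwpos : (0:ℝ) < ‖w‖ := norm_pos_iff.mpr hw
  set p : ℝ := ⟪w, x⟫ with hp
  set c : ℝ := p / ‖w‖ with hc
  have hcond : ∀ ε : ℝ, (0 < p - ‖w‖ * ε) ↔ ε < c := by
    intro ε
    rw [sub_pos, hc, lt_div_iff₀ hwpos, mul_comm]
  refine ⟨?_, ?_, ?_, ?_, ?_⟩
  · -- integral identity
    intro k
    have hβ' : (0:ℝ) < β / ‖w‖ := div_pos hβ hwpos
    calc ∫ ε : ℝ, pdens β ε * (w k * (if 0 < p - ‖w‖ * ε then (1:ℝ) else 0))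
        = ∫ ε : ℝ, w k * (Iio c).indicator (pdens β) ε := by
          apply integral_congr_ae
          filter_upwards with ε
          by_cases h : ε < c
          · rw [if_pos ((hcond ε).mpr h), Set.indicator_of_mem (Set.mem_Iio.mpr h), mul_one]
            ring
          · rw [if_neg (fun h' => h ((hcond ε).mp h')),
              Set.indicator_of_notMem (by simpa using h), mul_zero, mul_zero]
      _ = w k * ∫ ε in Iio c, pdens β ε := by
          rw [integral_const_mul, integral_indicator measurableSet_Iio]
      _ = w k * logisticSigma β c := by rw [integral_pdens_Iio β hβ c]
      _ = w k * logisticSigma (β / ‖w‖) p := by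
          have harg : β * c = β / ‖w‖ * p := by rw [hc, div_mul_eq_mul_div, mul_div_assoc]
          unfold logisticSigma
          rw [harg]
  · -- relu gradient
    intro ε hne
    set z : EuclideanSpace ℝ (Fin d) := x - ε • (‖w‖⁻¹ • w) with hz
    have hww : ‖w‖⁻¹ * ⟪w, w⟫ = ‖w‖ := by
      rw [real_inner_self_eq_norm_mul_norm, ← mul_assoc, inv_mul_cancel₀ hwpos.ne', one_mul]
    have hinner : ⟪w, z⟫ = p - ‖w‖ * ε := by
      rw [hz, inner_sub_right, real_inner_smul_right, real_inner_smul_right, hww, ← hp]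
      ring
    rcases lt_or_gt_of_ne (Ne.symm hne) with h | h
    · -- ‖w‖ * ε < p  : positive side
      have hpos : 0 < p - ‖w‖ * ε := sub_pos.mpr h
      rw [if_pos hpos, one_smul]
      have hgrad := hasGradientAt_inner_right w z
      apply hgrad.congr_of_eventuallyEq
      have hopen : IsOpen {y : EuclideanSpace ℝ (Fin d) | 0 < ⟪w, y⟫} :=
        isOpen_lt continuous_const (Continuous.inner continuous_const continuous_id)
      have hmem : z ∈ {y : EuclideanSpace ℝ (Fin d) | 0 < ⟪w, y⟫} := by
        simp only [Set.mem_setOf_eq, hinner]; exact hpos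
      filter_upwards [hopen.mem_nhds hmem] with y hy
      unfold relu
      exact max_eq_left (le_of_lt hy)
    · -- p < ‖w‖ * ε : negative side
      have hneg : p - ‖w‖ * ε < 0 := sub_neg.mpr h
      rw [if_neg (not_lt.mpr hneg.le), zero_smul]
      have hgrad : HasGradientAt (fun _ : EuclideanSpace ℝ (Fin d) => (0:ℝ)) 0 z :=
        hasGradientAt_const z (0:ℝ)
      apply hgrad.congr_of_eventuallyEq
      have hopen : IsOpen {y : EuclideanSpace ℝ (Fin d) | ⟪w, y⟫ < 0} :=
        isOpen_lt (Continuous.inner continuous_const continuous_id) continuous_const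
      have hmem : z ∈ {y : EuclideanSpace ℝ (Fin d) | ⟪w, y⟫ < 0} := by
        simp only [Set.mem_setOf_eq, hinner]; exact hneg
      filter_upwards [hopen.mem_nhds hmem] with y hy
      unfold relu
      exact max_eq_right (le_of_lt hy)
  · intro ε k
    rw [PiLp.smul_apply, smul_eq_mul, mul_comm]
  · -- softplus gradient
    set β' : ℝ := β / ‖w‖ with hβ'def
    have hβ' : (0:ℝ) < β' := div_pos hβ hwpos
    have hφ : HasDerivAt (softplus β') (logisticSigma β' p) p := by
      have hpos : (0:ℝ) < 1 + Real.exp (β' * p) := by positivity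
      have h0 : HasDerivAt (fun s : ℝ => β' * s) β' p := by
        simpa using (hasDerivAt_id p).const_mul β'
      have h1 : HasDerivAt (fun s : ℝ => 1 + Real.exp (β' * s))
          (Real.exp (β' * p) * β') p := (h0.exp).const_add 1
      have h2 := (h1.log hpos.ne').const_mul (1 / β')
      have : HasDerivAt (softplus β')
          (1 / β' * (Real.exp (β' * p) * β' / (1 + Real.exp (β' * p)))) p := h2
      convert this using 1
      unfold logisticSigma
      rw [Real.exp_neg]
      have he : (0:ℝ) < Real.exp (β' * p) := Real.exp_pos _
      field_simp
      ring
    exact hasGradientAt_smul_inner w x hφ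
  · intro k
    rw [PiLp.smul_apply, smul_eq_mul, mul_comm]
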